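/- (Bounded Real Lemma, necessity part.) Let L, H, V, N, Z be bounded operators on a complex Hilbert space with H self-adjoint and V self-adjoint nonnegative, let g > 0 and λ ≥ 0 be real numbers, and set Γ = g²·I − Z*Z. Suppose that for every bounded operator w such that w and w* commute with each of V, H, L, L*, N, N*, Z, Z*, one has 𝓛_L(V) − i[V, H] − w*Γw + w*([V, L] + Z*N) + ([L*, V] + N*Z)w + N*N − λ·I ≤ 0. Then Γ ≥ 0. -/

import Mathlib

noncomputable section

open Finset
open scoped ComplexOrder

variable {E : Type*} [NormedAddCommGroup E] [InnerProductSpace ℂ E] [CompleteSpace E]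

/-- Operator ordering: `A ≤ B` iff `⟨ψ, Aψ⟩ ≤ ⟨ψ, Bψ⟩` for all `ψ`. -/
def opLE (A B : E →L[ℂ] E) : Prop :=
  ∀ ψ : E, (inner ℂ ψ (A ψ) : ℂ) ≤ (inner ℂ ψ (B ψ) : ℂ)

/-- The single-channel Lindblad superoperator `𝓛_L(X) = (1/2)(L*[X,L] + [L*,X]L)`. -/
def lind1 (L X : E →L[ℂ] E) : E →L[ℂ] E :=
  (2 : ℂ)⁻¹ • (star L * ⁅X, L⁆ + ⁅star L, X⁆ * L)

/-- Bounded Real Lemma, necessity: with `Γ = g²I − Z*Z`, if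
`𝓛_L(V) − i[V,H] − w*Γw + w*([V,L] + Z*N) + ([L*,V] + N*Z)w + N*N − λI ≤ 0`
for every `w` with `w, w*` commuting with `V, H, L, L*, N, N*, Z, Z*`, then `Γ ≥ 0`. -/
theorem stmt_9
    (L Hm V N Z : E →L[ℂ] E) (g lam : ℝ)
    (hHm : IsSelfAdjoint Hm) (hV : IsSelfAdjoint V)
    (hVpos : ∀ ψ : E, 0 ≤ (inner ℂ ψ (V ψ) : ℂ))
    (hg : 0 < g) (hlam : 0 ≤ lam)
    (h : ∀ w : E →L[ℂ] E,
      (∀ a ∈ ({V, Hm, L, star L, N, star N, Z, star Z} : Set (E →L[ℂ] E)),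
        Commute w a ∧ Commute (star w) a) →
      opLE (lind1 L V + (-Complex.I) • ⁅V, Hm⁆
        - star w * ((g : ℂ) ^ 2 • 1 - star Z * Z) * w
        + star w * (⁅V, L⁆ + star Z * N) + (⁅star L, V⁆ + star N * Z) * w
        + star N * N - (lam : ℂ) • 1) 0) :
    opLE 0 ((g : ℂ) ^ 2 • 1 - star Z * Z) := by
  intro ψ
  set Γ : E →L[ℂ] E := (g : ℂ) ^ 2 • 1 - star Z * Z with hΓ
  set A' : E →L[ℂ] E := lind1 L V + (-Complex.I) • ⁅V, Hm⁆ + star N * N - (lam : ℂ) • 1 with hA'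
  set B : E →L[ℂ] E := (⁅V, L⁆ + star Z * N) + (⁅star L, V⁆ + star N * Z) with hB
  set a : ℂ := inner ℂ ψ (A' ψ) with ha
  set b : ℂ := inner ℂ ψ (B ψ) with hb
  set c : ℂ := inner ℂ ψ (Γ ψ) with hc
  -- Key: for every real t, a + t b - t² c ≤ 0
  have key : ∀ t : ℝ, a + (t : ℂ) * b - (t : ℂ) ^ 2 * c ≤ 0 := by
    intro t
    set w : E →L[ℂ] E := (t : ℂ) • 1 with hw
    have hsw : star w = w := by
      simp [hw, star_smul, Complex.star_def, Complex.conj_ofReal]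
    have hcomm : ∀ a ∈ ({V, Hm, L, star L, N, star N, Z, star Z} : Set (E →L[ℂ] E)),
        Commute w a ∧ Commute (star w) a := by
      intro A _
      constructor
      · simp [hw, Commute, SemiconjBy, smul_mul_assoc, mul_smul_comm]
      · rw [hsw]; simp [hw, Commute, SemiconjBy, smul_mul_assoc, mul_smul_comm]
    have := h w hcomm ψ
    simp only [ContinuousLinearMap.zero_apply, inner_zero_right] at this
    have hXeq : (lind1 L V + (-Complex.I) • ⁅V, Hm⁆
        - star w * ((g : ℂ) ^ 2 • 1 - star Z * Z) * w
        + star w * (⁅V, L⁆ + star Z * N) + (⁅star L, V⁆ + star N * Z) * w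
        + star N * N - (lam : ℂ) • 1)
        = A' + (t : ℂ) • B - ((t : ℂ) ^ 2) • Γ := by
      rw [hsw, hw]
      simp only [smul_mul_assoc, mul_smul_comm, one_mul, mul_one, hA', hB, hΓ]
      module
    rw [hXeq] at this
    have hinner : (inner ℂ ψ ((A' + (t : ℂ) • B - ((t : ℂ) ^ 2) • Γ) ψ) : ℂ)
        = a + (t : ℂ) * b - (t : ℂ) ^ 2 * c := by
      simp only [ContinuousLinearMap.add_apply, ContinuousLinearMap.sub_apply,
        ContinuousLinearMap.smul_apply, inner_add_right, inner_sub_right,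
        inner_smul_right, ha, hb, hc]
    rw [hinner] at this
    exact this
  -- extract real/imag facts
  have him : c.im = 0 := by
    have h0 := (Complex.le_def.mp (key 0)).2
    have h1 := (Complex.le_def.mp (key 1)).2
    have h2 := (Complex.le_def.mp (key (-1))).2
    simp [Complex.sub_im, Complex.add_im, Complex.mul_im, Complex.ofReal_im,
      Complex.ofReal_re] at h0 h1 h2
    linarith
  have hre : 0 ≤ c.re := by
    by_contra hneg
    push_neg at hneg
    set d : ℝ := -c.re with hd
    have hdpos : 0 < d := by simp [hd]; linarith
    set t : ℝ := max 1 ((|a.re| + |b.re| + 1) / d) with ht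
    have ht1 : 1 ≤ t := le_max_left _ _
    have ht2 : (|a.re| + |b.re| + 1) / d ≤ t := le_max_right _ _
    have htd : |a.re| + |b.re| + 1 ≤ t * d := by
      rw [div_le_iff₀ hdpos] at ht2; linarith
    have hk := key t
    rw [Complex.le_def] at hk
    obtain ⟨hkr, _⟩ := hk
    simp [Complex.sub_re, Complex.add_re, Complex.mul_re, Complex.ofReal_re,
      Complex.ofReal_im, Complex.zero_re, pow_two] at hkr
    have ht0 : (0:ℝ) ≤ t := le_trans zero_le_one ht1
    have h1 : t * (|a.re| + |b.re| + 1) ≤ t * (t * d) :=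
      mul_le_mul_of_nonneg_left htd ht0
    have h4 : t * (t * d) = -(t * t * c.re) := by rw [hd]; ring
    have h2 : -a.re ≤ |a.re| := neg_le_abs _
    have h3 : -(t * b.re) ≤ t * |b.re| := by
      have := mul_le_mul_of_nonneg_left (neg_le_abs b.re) ht0
      nlinarith [abs_nonneg b.re]
    have h5 : |a.re| ≤ t * |a.re| := le_mul_of_one_le_left (abs_nonneg _) ht1
    nlinarith
  rw [Complex.le_def]
  constructor
  · simpa using hre
  · simp [him]
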